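/- With W as above and T := P_{ran V} ∘ J_W restricted to ran V, the operator T is firmly nonexpansive on (ran V, ⟨·,·⟩_V): for all z, w ∈ ran V, ⟨Tz − Tw, (Id − T)z − (Id − T)w⟩_V ≥ 0. -/

import Mathlib

open RealInnerProductSpace

/-- A set-valued operator is monotone. -/
def MonotoneOp {E : Type*} [NormedAddCommGroup E] [InnerProductSpace ℝ E]
    (A : E → Set E) : Prop :=
  ∀ x y u v, u ∈ A x → v ∈ A y → 0 ≤ ⟪x - y, u - v⟫

/-- A set-valued operator is maximally monotone. -/
def MaximalMonotone {E : Type*} [NormedAddCommGroup E] [InnerProductSpace ℝ E]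
    (A : E → Set E) : Prop :=
  MonotoneOp A ∧ ∀ x u, (∀ y v, v ∈ A y → 0 ≤ ⟪x - y, u - v⟫) → u ∈ A x

/-- The pair `(x, u)` regarded as an element of the Hilbert direct sum `H ⊕ G`. -/
noncomputable def pd {H G : Type*} (x : H) (u : G) : WithLp 2 (H × G) :=
  (WithLp.equiv 2 (H × G)).symm (x, u)

/-- The operator `T := P_{ran V} ∘ J_W` restricted to `ran V` is firmly
nonexpansive on `(ran V, ⟪·,·⟫_V)`:
`⟪Tz − Tw, (Id − T)z − (Id − T)w⟫_V ≥ 0` for all `z, w ∈ ran V`. -/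
theorem stmt_12 {H G : Type*} [NormedAddCommGroup H] [InnerProductSpace ℝ H] [CompleteSpace H]
    [NormedAddCommGroup G] [InnerProductSpace ℝ G] [CompleteSpace G]
    (A : H → Set H) (B : G → Set G) (L : H →L[ℝ] G)
    (hA : MaximalMonotone A) (hB : MaximalMonotone B)
    (Ups UpsI : H →L[ℝ] H) (Sg SgI : G →L[ℝ] G)
    (τ σ : ℝ) (hτ : 0 < τ) (hσ : 0 < σ)
    (hUsa : ∀ x y : H, ⟪Ups x, y⟫ = ⟪x, Ups y⟫)
    (hUsm : ∀ x : H, τ * ‖x‖ ^ 2 ≤ ⟪Ups x, x⟫)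
    (hSsa : ∀ u v : G, ⟪Sg u, v⟫ = ⟪u, Sg v⟫)
    (hSsm : ∀ u : G, σ * ‖u‖ ^ 2 ≤ ⟪Sg u, u⟫)
    (hUinv : Ups.comp UpsI = ContinuousLinearMap.id ℝ H ∧
      UpsI.comp Ups = ContinuousLinearMap.id ℝ H)
    (hSinv : Sg.comp SgI = ContinuousLinearMap.id ℝ G ∧
      SgI.comp Sg = ContinuousLinearMap.id ℝ G)
    (V : WithLp 2 (H × G) →L[ℝ] WithLp 2 (H × G))
    (hV : ∀ (x : H) (u : G),
      V (pd x u) = pd (UpsI x - ContinuousLinearMap.adjoint L u) (SgI u - L x))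
    (M : WithLp 2 (H × G) → Set (WithLp 2 (H × G)))
    (hM : ∀ (x : H) (u : G), M (pd x u) =
      {yv : WithLp 2 (H × G) |
        (WithLp.equiv 2 (H × G) yv).1 - ContinuousLinearMap.adjoint L u ∈ A x ∧
        u ∈ B ((WithLp.equiv 2 (H × G) yv).2 + L x)})
    (W : WithLp 2 (H × G) → Set (WithLp 2 (H × G)))
    (hW : ∀ pq : WithLp 2 (H × G), W pq = {yv : WithLp 2 (H × G) | V yv ∈ M pq})
    (JW : WithLp 2 (H × G) → WithLp 2 (H × G))
    (hJW : ∀ z pq : WithLp 2 (H × G), JW z = pq ↔ z - pq ∈ W pq)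
    (P : WithLp 2 (H × G) →L[ℝ] WithLp 2 (H × G))
    (hPmem : ∀ z, P z ∈ Set.range V)
    (hPfix : ∀ z ∈ Set.range V, P z = z)
    (hPorth : ∀ z : WithLp 2 (H × G), ∀ w ∈ Set.range V, ⟪z - P z, w⟫ = 0)
    (hVmono : ∀ z : WithLp 2 (H × G), 0 ≤ ⟪V z, z⟫)
    (hVsa : ∀ z w : WithLp 2 (H × G), ⟪V z, w⟫ = ⟪z, V w⟫)
    (hclosed : IsClosed (Set.range V)) :
    ∀ z ∈ Set.range V, ∀ w ∈ Set.range V,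
      0 ≤ ⟪P (JW z) - P (JW w), V ((z - P (JW z)) - (w - P (JW w)))⟫ := by
  intro z hz w hw
  set p := JW z with hp
  set q := JW w with hq
  -- membership facts
  have hzp : V (z - p) ∈ M p := by
    have h := (hJW z p).mp hp.symm
    rw [hW p] at h
    exact h
  have hwq : V (w - q) ∈ M q := by
    have h := (hJW w q).mp hq.symm
    rw [hW q] at h
    exact h
  -- V kills (Id - P)
  have hVker : ∀ r : WithLp 2 (H × G), V (r - P r) = 0 := by
    intro r
    have h : ⟪V (r - P r), V (r - P r)⟫ = 0 := by
      rw [hVsa]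
      exact hPorth r (V (V (r - P r))) ⟨_, rfl⟩
    exact inner_self_eq_zero.mp h
  have e1 : V (P p) = V p := by
    have h := hVker p; rw [map_sub, sub_eq_zero] at h; exact h.symm
  have e2 : V (P q) = V q := by
    have h := hVker q; rw [map_sub, sub_eq_zero] at h; exact h.symm
  -- monotonicity of M
  have hMmono : ∀ (a b m n : WithLp 2 (H × G)), m ∈ M a → n ∈ M b →
      0 ≤ ⟪a - b, m - n⟫ := by
    intro a b m n hm hn
    set E := WithLp.equiv 2 (H × G) with hE
    have hm' : m ∈ M (pd (E a).1 (E a).2) := hm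
    have hn' : n ∈ M (pd (E b).1 (E b).2) := hn
    rw [hM] at hm' hn'
    obtain ⟨hm1, hm2⟩ := hm'
    obtain ⟨hn1, hn2⟩ := hn'
    have hAin := hA.1 (E a).1 (E b).1 _ _ hm1 hn1
    have hBin := hB.1 ((E m).2 + L (E a).1) ((E n).2 + L (E b).1) _ _ hm2 hn2
    have hadj : ⟪(E a).1 - (E b).1,
        ContinuousLinearMap.adjoint L (E a).2 - ContinuousLinearMap.adjoint L (E b).2⟫
        = ⟪L (E a).1 - L (E b).1, (E a).2 - (E b).2⟫ := by
      rw [← map_sub, ← map_sub, ContinuousLinearMap.adjoint_inner_right]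
    rw [WithLp.prod_inner_apply]
    have hfst : (a - b).ofLp.1 = (E a).1 - (E b).1 := rfl
    have hsnd : (a - b).ofLp.2 = (E a).2 - (E b).2 := rfl
    have hmfst : (m - n).ofLp.1 = (E m).1 - (E n).1 := rfl
    have hmsnd : (m - n).ofLp.2 = (E m).2 - (E n).2 := rfl
    rw [hfst, hsnd, hmfst, hmsnd]
    have hB2 : ⟪((E m).2 + L (E a).1) - ((E n).2 + L (E b).1), (E a).2 - (E b).2⟫
        = ⟪(E m).2 - (E n).2, (E a).2 - (E b).2⟫
          + ⟪L (E a).1 - L (E b).1, (E a).2 - (E b).2⟫ := by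
      rw [← inner_add_left]; congr 1; abel
    rw [hB2] at hBin
    simp only [inner_sub_right] at hAin
    have hadj2 : ⟪(E a).1 - (E b).1, ContinuousLinearMap.adjoint L (E a).2⟫
        - ⟪(E a).1 - (E b).1, ContinuousLinearMap.adjoint L (E b).2⟫
        = ⟪L (E a).1 - L (E b).1, (E a).2 - (E b).2⟫ := by
      rw [← inner_sub_right]; exact hadj
    have hc1 : ⟪(E a).2 - (E b).2, (E m).2 - (E n).2⟫
        = ⟪(E m).2 - (E n).2, (E a).2 - (E b).2⟫ := real_inner_comm _ _
    rw [inner_sub_right ((E a).1 - (E b).1), hc1]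
    linarith
  have hmain := hMmono p q _ _ hzp hwq
  -- rewrite the goal
  have key : V ((z - P p) - (w - P q)) = V (z - p) - V (w - q) := by
    simp only [map_sub, e1, e2]
  rw [key]
  have decomp : P p - P q = (p - q) + ((P p - p) - (P q - q)) := by abel
  rw [decomp, inner_add_left]
  have h0 : ⟪(P p - p) - (P q - q), V (z - p) - V (w - q)⟫ = 0 := by
    rw [← map_sub V, ← hVsa]
    have : V ((P p - p) - (P q - q)) = 0 := by simp [map_sub, e1, e2]
    rw [this, inner_zero_left]
  linarith
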